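/- Let L be a nonzero N×N real matrix (N ≥ 2) with zero row sums, i.e. L·𝟙_N = 0 (in particular, any balanced Laplacian matrix of an undirected graph). Partition L as a block matrix [[L₁₁, L_{1,2:N}], [L_{1,2:N}ᵀ, L_{2:N,2:N}]] with L₁₁ ∈ ℝ, and define the (N−1)×(N−1) matrix L̄ = L_{2:N,2:N} − 𝟙_{N−1} L_{1,2:N}, where 𝟙_{N−1} is the all-ones column vector. Then the characteristic polynomial of L equals X times the characteristic polynomial of L̄; in particular, the nonzero eigenvalues of L are exactly the nonzero eigenvalues of L̄ with the same algebraic multiplicities. -/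
import Mathlib


open Polynomial Matrix

/-- Let `L` be a nonzero `(m+1) × (m+1)` real matrix (`m ≥ 1`, so `N = m+1 ≥ 2`)
with zero row sums, i.e. `L ⬝ 𝟙 = 0`.  With the block partition
`L = [[L₁₁, L_{1,2:N}], [L_{1,2:N}ᵀ, L_{2:N,2:N}]]`, define
`L̄ i j = L_{2:N,2:N} i j − (𝟙 L_{1,2:N}) i j = L (i+1) (j+1) − L 0 (j+1)`.
Then `charpoly L = X * charpoly L̄`; in particular the nonzero eigenvalues of `L`
are exactly those of `L̄` with the same algebraic multiplicities. -/
theorem stmt0_charpoly_reduction (m : ℕ) (hm : 1 ≤ m)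
    (L : Matrix (Fin (m + 1)) (Fin (m + 1)) ℝ)
    (hL0 : L ≠ 0)
    (hrow : L.mulVec (fun _ => (1 : ℝ)) = 0) :
    L.charpoly =
      Polynomial.X *
        (Matrix.of fun i j : Fin m => L i.succ j.succ - L 0 j.succ).charpoly := by
  classical
  have hrowsum : ∀ i, ∑ j, L i j = 0 := by
    intro i
    have := congrFun hrow i
    simpa [Matrix.mulVec, dotProduct] using this
  set Lb : Matrix (Fin m) (Fin m) ℝ :=
    Matrix.of (fun i j : Fin m => L i.succ j.succ - L 0 j.succ) with hLbdef
  set M : Matrix (Fin (m+1)) (Fin (m+1)) ℝ[X] := charmatrix L with hMdef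
  set S : Matrix (Fin (m+1)) (Fin (m+1)) ℝ[X] :=
    Matrix.of (fun i j => if i = j then 1 else if j = 0 then -1 else 0) with hSdef
  set T : Matrix (Fin (m+1)) (Fin (m+1)) ℝ[X] :=
    Matrix.of (fun i j => if j = 0 then 1 else if i = j then 1 else 0) with hTdef
  -- determinants of the elementary matrices
  have hdetS : S.det = 1 := by
    rw [Matrix.det_of_lowerTriangular]
    · simp [hSdef]
    · intro i j hij
      have h1 : i < j := hij
      have h2 : i ≠ j := ne_of_lt h1
      have h3 : j ≠ 0 := Fin.ne_of_gt (lt_of_le_of_lt (Fin.zero_le i) h1)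
      simp [hSdef, h2, h3]
  have hdetT : T.det = 1 := by
    rw [Matrix.det_of_lowerTriangular]
    · simp [hTdef]
    · intro i j hij
      have h1 : i < j := hij
      have h2 : i ≠ j := ne_of_lt h1
      have h3 : j ≠ 0 := Fin.ne_of_gt (lt_of_le_of_lt (Fin.zero_le i) h1)
      simp [hTdef, h2, h3]
  -- row sums of the charmatrix
  have hMrow : ∀ i, ∑ b, M i b = X := by
    intro i
    have : ∑ b, M i b
        = (∑ b, (Matrix.diagonal (fun _ => (X : ℝ[X])) i b)) - C (∑ b, L i b) := by
      simp [hMdef, charmatrix_apply, Finset.sum_sub_distrib, map_sum]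
    rw [this, hrowsum i]
    simp [Matrix.diagonal_apply]
  -- entries of M * T
  have hMT : ∀ i j, (M * T) i j = if j = 0 then X else M i j := by
    intro i j
    rcases eq_or_ne j 0 with h | h
    · subst h
      simpa [Matrix.mul_apply, hTdef] using hMrow i
    · simp [Matrix.mul_apply, hTdef, h, mul_ite, Finset.sum_ite_eq']
  -- entries of S * A for any A
  have hSA : ∀ (A : Matrix (Fin (m+1)) (Fin (m+1)) ℝ[X]) i j,
      (S * A) i j = A i j - (if i = 0 then 0 else A 0 j) := by
    intro A i j
    rcases eq_or_ne i 0 with h | h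
    · subst h
      have : ∀ a, S 0 a * A a j = if a = 0 then A a j else 0 := by
        intro a
        rcases eq_or_ne a 0 with rfl | ha
        · simp [hSdef]
        · simp [hSdef, ha, Ne.symm ha]
      rw [Matrix.mul_apply, Finset.sum_congr rfl fun a _ => this a]
      simp [Finset.sum_ite_eq']
    · have : ∀ a, S i a * A a j
          = (if a = i then A a j else 0) + (if a = 0 then -A a j else 0) := by
        intro a
        rcases eq_or_ne a i with rfl | ha
        · simp [hSdef, h]
        · rcases eq_or_ne a 0 with rfl | ha0
          · simp [hSdef, Ne.symm h, h]
          · simp [hSdef, ha, ha0, Ne.symm ha]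
      rw [Matrix.mul_apply, Finset.sum_congr rfl fun a _ => this a,
        Finset.sum_add_distrib]
      simp [h, sub_eq_add_neg, Finset.sum_ite_eq']
  set N : Matrix (Fin (m+1)) (Fin (m+1)) ℝ[X] := S * (M * T) with hNdef
  have hcol : ∀ i, N i 0 = if i = 0 then X else 0 := by
    intro i
    rw [hNdef, hSA]
    rcases eq_or_ne i 0 with h | h <;> simp [h, hMT]
  have hsub : N.submatrix Fin.succ Fin.succ = charmatrix Lb := by
    apply Matrix.ext
    intro i j
    have hne : (0 : Fin (m+1)) ≠ j.succ := (Fin.succ_ne_zero j).symm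
    rw [Matrix.submatrix_apply, hNdef, hSA, hMT, hMT]
    rcases eq_or_ne i j with rfl | hij
    · simp [hMdef, hLbdef, charmatrix_apply, hne, Fin.succ_ne_zero,
        Matrix.diagonal_apply, map_sub]
      ring
    · have h2 : i.succ ≠ j.succ := fun h => hij (Fin.succ_injective _ h)
      simp [hMdef, hLbdef, charmatrix_apply, hne, h2, hij, Fin.succ_ne_zero,
        Matrix.diagonal_apply, map_sub]
      ring
  have hdetN : N.det = X * (charmatrix Lb).det := by
    rw [Matrix.det_succ_column_zero]
    rw [Finset.sum_eq_single (0 : Fin (m+1))]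
    · rw [hcol 0]
      simp [Fin.succAbove_zero, hsub]
    · intro b _ hb
      rw [hcol b]
      simp [hb]
    · simp
  have hfinal : N.det = M.det := by
    rw [hNdef, ← Matrix.mul_assoc, Matrix.det_mul, Matrix.det_mul, hdetS, hdetT]
    ring
  calc L.charpoly = M.det := rfl
    _ = N.det := hfinal.symm
    _ = X * (charmatrix Lb).det := hdetN
    _ = X * Lb.charpoly := rfl
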